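/- Let dA, dB ≥ 1 and let ψ : Fin dA × Fin dB → ℂ be a unit vector (∑_{(i,j)} |ψ(i,j)|² = 1). Then the following are equivalent: (1) there exist a permutation π of Fin dA × Fin dB, phases φ : Fin dA × Fin dB → ℝ, and vectors a : Fin dA → ℂ, b : Fin dB → ℂ such that exp(i·φ(i,j))·ψ(π(i,j)) = a(i)·b(j) for all (i,j) (i.e., some incoherent unitary maps ψ to a product vector); (2) there exists a permutation π of Fin dA × Fin dB such that the real matrix M with M(i,j) = |ψ(π(i,j))| has rank 1. -/

import Mathlib

open Matrix

lemma rank_le_one_of_prod {m n : ℕ} (M : Matrix (Fin m) (Fin n) ℝ)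
    (c : Fin m → ℝ) (d : Fin n → ℝ) (h : ∀ i j, M i j = c i * d j) :
    M.rank ≤ 1 := by
  have hrange : LinearMap.range M.mulVecLin ≤ Submodule.span ℝ {c} := by
    rintro x ⟨v, rfl⟩
    have : M.mulVecLin v = (∑ j, d j * v j) • c := by
      funext i
      simp only [mulVecLin_apply, mulVec, dotProduct, h, Pi.smul_apply, smul_eq_mul,
        Finset.sum_mul]
      exact Finset.sum_congr rfl fun k _ => by ring
    rw [this]
    exact Submodule.smul_mem _ _ (Submodule.mem_span_singleton_self c)
  calc Matrix.rank M = Module.finrank ℝ (LinearMap.range M.mulVecLin) := rfl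
    _ ≤ Module.finrank ℝ (Submodule.span ℝ {c}) := Submodule.finrank_mono hrange
    _ ≤ 1 := by
        rcases eq_or_ne c 0 with rfl | hc
        · rw [Submodule.span_zero_singleton]; simp
        · rw [finrank_span_singleton hc]

lemma rank_pos_of_ne {m n : ℕ} (M : Matrix (Fin m) (Fin n) ℝ)
    (i : Fin m) (j : Fin n) (h : M i j ≠ 0) : 1 ≤ M.rank := by
  rw [Nat.one_le_iff_ne_zero]
  intro h0
  have : LinearMap.range M.mulVecLin = ⊥ := by
    have := Submodule.finrank_eq_zero (R := ℝ) (S := LinearMap.range M.mulVecLin)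
    exact this.mp h0
  have hcol : M.mulVecLin (Pi.single j 1) = 0 := by
    have hmem : M.mulVecLin (Pi.single j 1) ∈ LinearMap.range M.mulVecLin :=
      LinearMap.mem_range_self _ _
    rw [this] at hmem
    simpa using hmem
  have : M.mulVec (Pi.single j 1) i = 0 := by rw [← mulVecLin_apply, hcol]; rfl
  apply h
  simpa [mulVec, dotProduct, Pi.single_apply] using this

lemma exists_prod_of_rank_one {m n : ℕ} (M : Matrix (Fin m) (Fin n) ℝ)
    (h : M.rank = 1) : ∃ (c : Fin m → ℝ) (d : Fin n → ℝ), ∀ i j, M i j = c i * d j := by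
  have h1 : Module.finrank ℝ (LinearMap.range M.mulVecLin) = 1 := h
  obtain ⟨u, hu0, hu⟩ := finrank_eq_one_iff'.mp h1
  refine ⟨(u : Fin m → ℝ), fun j => (hu ⟨M.mulVec (Pi.single j 1),
    LinearMap.mem_range_self _ _⟩).choose, fun i j => ?_⟩
  have hspec := (hu ⟨M.mulVec (Pi.single j 1), LinearMap.mem_range_self _ _⟩).choose_spec
  have := congrFun (congrArg (Subtype.val) hspec) i
  simp only [Submodule.coe_smul, Pi.smul_apply, smul_eq_mul] at this
  rw [mul_comm, this]
  simp [mulVec, dotProduct, Pi.single_apply]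


/-- For a bipartite pure state `ψ` on `Fin dA × Fin dB`, the existence
of an incoherent unitary (permutation `π` of the joint incoherent basis, together with
phases `φ`) mapping `ψ` to a product vector `(i,j) ↦ a i * b j` is equivalent to the
existence of a permutation `π` such that the matrix of moduli `(i,j) ↦ |ψ (π (i,j))|`
has rank one. -/
theorem incoherent_unitary_to_product_iff_exists_perm_rank_one
    {dA dB : ℕ} (hdA : 1 ≤ dA) (hdB : 1 ≤ dB)
    (ψ : Fin dA × Fin dB → ℂ)
    (hψ : ∑ p : Fin dA × Fin dB, ‖ψ p‖ ^ 2 = 1) :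
    (∃ (π : Equiv.Perm (Fin dA × Fin dB)) (φ : Fin dA × Fin dB → ℝ)
        (a : Fin dA → ℂ) (b : Fin dB → ℂ),
        ∀ p : Fin dA × Fin dB,
          Complex.exp ((φ p : ℂ) * Complex.I) * ψ (π p) = a p.1 * b p.2) ↔
      (∃ π : Equiv.Perm (Fin dA × Fin dB),
        (Matrix.of fun i j => ‖ψ (π (i, j))‖).rank = 1) := by
  have hne : ∃ p, ψ p ≠ 0 := by
    by_contra hc
    push_neg at hc
    simp [hc] at hψ
  constructor
  · rintro ⟨π, φ, a, b, hab⟩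
    refine ⟨π, le_antisymm ?_ ?_⟩
    · apply rank_le_one_of_prod _ (fun i => ‖a i‖) (fun j => ‖b j‖)
      intro i j
      have h1 : ‖ψ (π (i, j))‖ =
          ‖Complex.exp ((φ (i, j) : ℂ) * Complex.I) * ψ (π (i, j))‖ := by
        rw [norm_mul, Complex.norm_exp_ofReal_mul_I, one_mul]
      simp only [Matrix.of_apply, h1, hab (i, j), norm_mul]
    · obtain ⟨p0, hp0⟩ := hne
      apply rank_pos_of_ne _ (π.symm p0).1 (π.symm p0).2
      simp only [Matrix.of_apply, Prod.mk.eta, Equiv.apply_symm_apply]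
      simpa using hp0
  · rintro ⟨π, hrank⟩
    obtain ⟨c, d, hcd⟩ := exists_prod_of_rank_one _ hrank
    refine ⟨π, fun p => -(ψ (π p)).arg, fun i => (c i : ℂ), fun j => (d j : ℂ), fun p => ?_⟩
    have key : Complex.exp ((↑(-(ψ (π p)).arg) : ℂ) * Complex.I) * ψ (π p)
        = (‖ψ (π p)‖ : ℂ) := by
      nth_rewrite 2 [← Complex.norm_mul_exp_arg_mul_I (ψ (π p))]
      rw [mul_left_comm, ← Complex.exp_add]
      have h0 : (↑(-(ψ (π p)).arg) : ℂ) * Complex.I + ↑(ψ (π p)).arg * Complex.I = 0 := by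
        push_cast; ring
      rw [h0, Complex.exp_zero, mul_one]
    rw [key]
    have := hcd p.1 p.2
    simp only [Matrix.of_apply, Prod.mk.eta] at this
    rw [this]
    push_cast
    ring
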